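/- Let m ≥ 1, x_k = k/2^m, and y_k = φ₂(k) for k = 0,...,2^m−1. Then ∑_{k=0}^{2^m−1} x_k²·y_k² = (8(2^{2m+1} − 3·2^m + 1)² + 9m·2^m(4^{m+1} + 2^m(m−9) + 4))/(9·2^{3m+5}). -/

import Mathlib

/-- The base-2 digit reversal (radical inverse) function. -/
noncomputable def phi2 (k : ℕ) : ℝ :=
  ∑ i ∈ Finset.range (k + 1), if Nat.testBit k i then (1 : ℝ) / 2 ^ (i + 1) else 0

lemma phi2_eq (k n : ℕ) (h : k < n) :
    phi2 k = ∑ i ∈ Finset.range n, if Nat.testBit k i then (1 : ℝ) / 2 ^ (i + 1) else 0 := by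
  unfold phi2
  apply Finset.sum_subset (Finset.range_subset_range.2 h)
  intro i _ hi
  simp only [Finset.mem_range, not_lt] at hi
  have hk : k < 2 ^ i :=
    lt_of_lt_of_le (Nat.lt_two_pow_self (n := k)) (Nat.pow_le_pow_right (by norm_num) (by omega))
  simp [Nat.testBit_lt_two_pow hk]

lemma phi2_two_mul (j : ℕ) : phi2 (2 * j) = phi2 j / 2 := by
  rw [phi2_eq (2 * j) ((2 * j + 1) + 1) (by omega), Finset.sum_range_succ']
  have h0 : Nat.testBit (2 * j) 0 = false := by
    simp [Nat.testBit_zero, Nat.mul_mod_right]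
  have hb : ∀ i : ℕ, Nat.testBit (2 * j) (i + 1) = Nat.testBit j i := by
    intro i
    rw [Nat.testBit_succ]
    congr 1
    omega
  simp only [hb, h0, Bool.false_eq_true, if_false, add_zero]
  rw [phi2_eq j (2 * j + 1) (by omega), Finset.sum_div]
  apply Finset.sum_congr rfl
  intro i _
  split
  · rw [pow_succ]; ring
  · simp

lemma phi2_two_mul_add_one (j : ℕ) : phi2 (2 * j + 1) = 1 / 2 + phi2 j / 2 := by
  rw [phi2_eq (2 * j + 1) ((2 * j + 1) + 1) (by omega), Finset.sum_range_succ']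
  have h0 : Nat.testBit (2 * j + 1) 0 = true := by
    simp [Nat.testBit_zero, Nat.mul_add_mod]
  have hb : ∀ i : ℕ, Nat.testBit (2 * j + 1) (i + 1) = Nat.testBit j i := by
    intro i
    rw [Nat.testBit_succ]
    congr 1
    omega
  simp only [hb, h0, eq_self_iff_true, if_true]
  have hs : (∑ i ∈ Finset.range (2 * j + 1), if j.testBit i then (1:ℝ) / 2 ^ (i + 1 + 1) else 0)
      = phi2 j / 2 := by
    rw [phi2_eq j (2 * j + 1) (by omega), Finset.sum_div]
    apply Finset.sum_congr rfl
    intro i _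
    split
    · rw [pow_succ]; ring
    · simp
  rw [hs]
  ring

lemma sum_range_two_mul (f : ℕ → ℝ) (n : ℕ) :
    ∑ k ∈ Finset.range (2 * n), f k = ∑ j ∈ Finset.range n, (f (2 * j) + f (2 * j + 1)) := by
  induction n with
  | zero => norm_num
  | succ n ih =>
    rw [show 2 * (n + 1) = (2 * n + 1) + 1 by ring, Finset.sum_range_succ,
      Finset.sum_range_succ, ih, Finset.sum_range_succ]
    ring

lemma phi2_zero : phi2 0 = 0 := by
  unfold phi2
  simp

/-- A: ∑ k -/
lemma sumA (m : ℕ) :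
    ∑ k ∈ Finset.range (2 ^ m), (k : ℝ) = (((2:ℝ) ^ m) ^ 2 - 2 ^ m) / 2 := by
  induction m with
  | zero => norm_num
  | succ m ih =>
    rw [show 2 ^ (m + 1) = 2 * 2 ^ m by ring, sum_range_two_mul]
    rw [Finset.sum_congr rfl (g := fun j : ℕ => 4 * (j : ℝ) + 1)
      (fun j _ => by push_cast; ring)]
    rw [Finset.sum_add_distrib, ← Finset.mul_sum, ih, Finset.sum_const,
      Finset.card_range, nsmul_eq_mul]
    push_cast
    ring

/-- B: ∑ k² -/
lemma sumB (m : ℕ) :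
    ∑ k ∈ Finset.range (2 ^ m), (k : ℝ) ^ 2
      = (2 * ((2:ℝ) ^ m) ^ 3 - 3 * ((2:ℝ) ^ m) ^ 2 + 2 ^ m) / 6 := by
  induction m with
  | zero => norm_num
  | succ m ih =>
    rw [show 2 ^ (m + 1) = 2 * 2 ^ m by ring, sum_range_two_mul]
    rw [Finset.sum_congr rfl (g := fun j : ℕ => 8 * (j : ℝ) ^ 2 + 4 * (j : ℝ) + 1)
      (fun j _ => by push_cast; ring)]
    rw [Finset.sum_add_distrib, Finset.sum_add_distrib, ← Finset.mul_sum, ← Finset.mul_sum,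
      ih, sumA, Finset.sum_const, Finset.card_range, nsmul_eq_mul]
    push_cast
    ring

/-- P: ∑ φ -/
lemma sumP (m : ℕ) :
    ∑ k ∈ Finset.range (2 ^ m), phi2 k = ((2:ℝ) ^ m - 1) / 2 := by
  induction m with
  | zero => norm_num [phi2_zero]
  | succ m ih =>
    rw [show 2 ^ (m + 1) = 2 * 2 ^ m by ring, sum_range_two_mul]
    rw [Finset.sum_congr rfl (g := fun j : ℕ => phi2 j + 1 / 2)
      (fun j _ => by rw [phi2_two_mul, phi2_two_mul_add_one]; ring)]
    rw [Finset.sum_add_distrib, ih, Finset.sum_const, Finset.card_range, nsmul_eq_mul]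
    push_cast
    ring

/-- Q: ∑ φ² -/
lemma sumQ (m : ℕ) :
    ∑ k ∈ Finset.range (2 ^ m), (phi2 k) ^ 2
      = (2 * ((2:ℝ) ^ m) ^ 2 - 3 * 2 ^ m + 1) / (6 * 2 ^ m) := by
  induction m with
  | zero => norm_num [phi2_zero]
  | succ m ih =>
    rw [show 2 ^ (m + 1) = 2 * 2 ^ m by ring, sum_range_two_mul]
    rw [Finset.sum_congr rfl (g := fun j : ℕ => (1/2) * (phi2 j) ^ 2 + (1/2) * phi2 j + 1 / 4)
      (fun j _ => by rw [phi2_two_mul, phi2_two_mul_add_one]; ring)]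
    rw [Finset.sum_add_distrib, Finset.sum_add_distrib, ← Finset.mul_sum, ← Finset.mul_sum,
      ih, sumP, Finset.sum_const, Finset.card_range, nsmul_eq_mul]
    have ht : (2:ℝ) ^ m ≠ 0 := by positivity
    push_cast
    field_simp
    ring

/-- C: ∑ k·φ -/
lemma sumC (m : ℕ) :
    ∑ k ∈ Finset.range (2 ^ m), (k : ℝ) * phi2 k
      = (2 * ((2:ℝ) ^ m) ^ 2 + (m : ℝ) * 2 ^ m - 4 * 2 ^ m + 2) / 8 := by
  induction m with
  | zero => norm_num [phi2_zero]
  | succ m ih =>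
    rw [show 2 ^ (m + 1) = 2 * 2 ^ m by ring, sum_range_two_mul]
    rw [Finset.sum_congr rfl
      (g := fun j : ℕ => 2 * ((j : ℝ) * phi2 j) + (j : ℝ) + (1/2) * phi2 j + 1 / 2)
      (fun j _ => by rw [phi2_two_mul, phi2_two_mul_add_one]; push_cast; ring)]
    rw [Finset.sum_add_distrib, Finset.sum_add_distrib, Finset.sum_add_distrib,
      ← Finset.mul_sum, ← Finset.mul_sum,
      ih, sumA, sumP, Finset.sum_const, Finset.card_range, nsmul_eq_mul]
    push_cast
    ring

/-- E: ∑ k²·φ -/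
lemma sumE (m : ℕ) :
    ∑ k ∈ Finset.range (2 ^ m), (k : ℝ) ^ 2 * phi2 k
      = (12 * ((2:ℝ) ^ m) ^ 3 + 9 * (m : ℝ) * ((2:ℝ) ^ m) ^ 2 - 30 * ((2:ℝ) ^ m) ^ 2
          - 9 * (m : ℝ) * 2 ^ m + 24 * 2 ^ m - 6) / 72 := by
  induction m with
  | zero => norm_num [phi2_zero]
  | succ m ih =>
    rw [show 2 ^ (m + 1) = 2 * 2 ^ m by ring, sum_range_two_mul]
    rw [Finset.sum_congr rfl
      (g := fun j : ℕ => 4 * ((j : ℝ) ^ 2 * phi2 j) + 2 * (j : ℝ) ^ 2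
        + 2 * ((j : ℝ) * phi2 j) + 2 * (j : ℝ) + (1/2) * phi2 j + 1 / 2)
      (fun j _ => by rw [phi2_two_mul, phi2_two_mul_add_one]; push_cast; ring)]
    rw [Finset.sum_add_distrib, Finset.sum_add_distrib, Finset.sum_add_distrib,
      Finset.sum_add_distrib, Finset.sum_add_distrib,
      ← Finset.mul_sum, ← Finset.mul_sum, ← Finset.mul_sum, ← Finset.mul_sum, ← Finset.mul_sum,
      ih, sumB, sumC, sumA, sumP, Finset.sum_const, Finset.card_range, nsmul_eq_mul]
    push_cast
    ring

/-- F: ∑ k·φ² -/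
lemma sumF (m : ℕ) :
    ∑ k ∈ Finset.range (2 ^ m), (k : ℝ) * (phi2 k) ^ 2
      = (12 * ((2:ℝ) ^ m) ^ 3 + 9 * (m : ℝ) * ((2:ℝ) ^ m) ^ 2 - 30 * ((2:ℝ) ^ m) ^ 2
          - 9 * (m : ℝ) * 2 ^ m + 24 * 2 ^ m - 6) / (72 * 2 ^ m) := by
  induction m with
  | zero => norm_num [phi2_zero]
  | succ m ih =>
    rw [show 2 ^ (m + 1) = 2 * 2 ^ m by ring, sum_range_two_mul]
    rw [Finset.sum_congr rfl
      (g := fun j : ℕ => (j : ℝ) * (phi2 j) ^ 2 + (j : ℝ) * phi2 j + (1/2) * (j : ℝ)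
        + (1/4) * (phi2 j) ^ 2 + (1/2) * phi2 j + 1 / 4)
      (fun j _ => by rw [phi2_two_mul, phi2_two_mul_add_one]; push_cast; ring)]
    rw [Finset.sum_add_distrib, Finset.sum_add_distrib, Finset.sum_add_distrib,
      Finset.sum_add_distrib, Finset.sum_add_distrib,
      ← Finset.mul_sum, ← Finset.mul_sum, ← Finset.mul_sum,
      ih, sumC, sumA, sumQ, sumP, Finset.sum_const, Finset.card_range, nsmul_eq_mul]
    have ht : (2:ℝ) ^ m ≠ 0 := by positivity
    push_cast
    field_simp
    ring

/-- D: ∑ k²·φ² -/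
lemma sumD (m : ℕ) :
    ∑ k ∈ Finset.range (2 ^ m), (k : ℝ) ^ 2 * (phi2 k) ^ 2
      = (32 * ((2:ℝ) ^ m) ^ 4 + 36 * (m : ℝ) * ((2:ℝ) ^ m) ^ 3 - 96 * ((2:ℝ) ^ m) ^ 3
          + 9 * (m : ℝ) ^ 2 * ((2:ℝ) ^ m) ^ 2 - 81 * (m : ℝ) * ((2:ℝ) ^ m) ^ 2
          + 104 * ((2:ℝ) ^ m) ^ 2 + 36 * (m : ℝ) * 2 ^ m - 48 * 2 ^ m + 8)
        / (288 * 2 ^ m) := by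
  induction m with
  | zero => norm_num [phi2_zero]
  | succ m ih =>
    rw [show 2 ^ (m + 1) = 2 * 2 ^ m by ring, sum_range_two_mul]
    rw [Finset.sum_congr rfl
      (g := fun j : ℕ => 2 * ((j : ℝ) ^ 2 * (phi2 j) ^ 2) + 2 * ((j : ℝ) ^ 2 * phi2 j)
        + (j : ℝ) ^ 2 + (j : ℝ) * (phi2 j) ^ 2 + 2 * ((j : ℝ) * phi2 j) + (j : ℝ)
        + (1/4) * (phi2 j) ^ 2 + (1/2) * phi2 j + 1 / 4)
      (fun j _ => by rw [phi2_two_mul, phi2_two_mul_add_one]; push_cast; ring)]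
    rw [Finset.sum_add_distrib, Finset.sum_add_distrib, Finset.sum_add_distrib,
      Finset.sum_add_distrib, Finset.sum_add_distrib, Finset.sum_add_distrib,
      Finset.sum_add_distrib, Finset.sum_add_distrib,
      ← Finset.mul_sum, ← Finset.mul_sum, ← Finset.mul_sum, ← Finset.mul_sum, ← Finset.mul_sum,
      ih, sumE, sumB, sumF, sumC, sumA, sumQ, sumP,
      Finset.sum_const, Finset.card_range, nsmul_eq_mul]
    have ht : (2:ℝ) ^ m ≠ 0 := by positivity
    push_cast
    field_simp
    ring

theorem hammersley_S5 (m : ℕ) (hm : 1 ≤ m) :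
    ∑ k ∈ Finset.range (2 ^ m), ((k : ℝ) / 2 ^ m) ^ 2 * (phi2 k) ^ 2
      = (8 * ((2:ℝ) ^ (2 * m + 1) - 3 * 2 ^ m + 1) ^ 2
          + 9 * (m : ℝ) * 2 ^ m * ((4:ℝ) ^ (m + 1) + 2 ^ m * ((m : ℝ) - 9) + 4))
        / (9 * 2 ^ (3 * m + 5)) := by
  have ht : (2:ℝ) ^ m ≠ 0 := by positivity
  have h1 : ∑ k ∈ Finset.range (2 ^ m), ((k : ℝ) / 2 ^ m) ^ 2 * (phi2 k) ^ 2
      = (∑ k ∈ Finset.range (2 ^ m), (k : ℝ) ^ 2 * (phi2 k) ^ 2) / ((2:ℝ) ^ m) ^ 2 := by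
    rw [Finset.sum_div]
    exact Finset.sum_congr rfl fun k _ => by rw [div_pow]; ring
  rw [h1, sumD]
  have e1 : (2:ℝ) ^ (2 * m + 1) = 2 * ((2:ℝ) ^ m) ^ 2 := by
    rw [pow_succ, mul_comm 2 m, pow_mul]; ring
  have e2 : (4:ℝ) ^ (m + 1) = 4 * ((2:ℝ) ^ m) ^ 2 := by
    rw [show (4:ℝ) = 2 ^ 2 by norm_num, ← pow_mul, show 2 * (m + 1) = m * 2 + 2 by ring,
      pow_add, pow_mul]
    ring
  have e3 : (2:ℝ) ^ (3 * m + 5) = 32 * ((2:ℝ) ^ m) ^ 3 := by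
    rw [pow_add, show 3 * m = m * 3 by ring, pow_mul]; ring
  rw [e1, e2, e3]
  field_simp
  ring
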